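/- Consider the DGL-based classification setup with M ≥ 2 hypotheses over a finite alphabet 𝒳, test sequence length n, and training sequence length N = nα for α > 0, where the true source distributions P_1,…,P_M satisfy min_{i ≠ j} V(P_i, P_j) > 0. Then the classification error probability satisfies Pr[e_CL] ≤ 2M · exp(−n( α (min_{i ≠ j} V(P_i, P_j))² / (2(2 + √α)²) − max{ 2·ln(M−1)/n , |𝒳|·ln 2 / n } )). -/

import Mathlib

open MeasureTheory ProbabilityTheory

/-- Total variation distance between two probability mass functions on a
finite alphabet: `V(P,Q) = (1/2) * ∑ a, |P a - Q a|`. -/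
noncomputable def tvDist {𝒳 : Type*} [Fintype 𝒳] (P Q : 𝒳 → ℝ) : ℝ :=
  (1 / 2) * ∑ a, |P a - Q a|

/-- Minimum of `tvDist (Q i) (Q j)` over all ordered pairs of distinct indices. -/
noncomputable def minPairTV {𝒳 : Type*} [Fintype 𝒳] {M : ℕ} (Q : Fin M → 𝒳 → ℝ) : ℝ :=
  sInf {x | ∃ i j : Fin M, i ≠ j ∧ x = tvDist (Q i) (Q j)}

/-- Empirical distribution of a sample `x : Fin N → 𝒳`:
`T a = (1/N) * #{k : x k = a}`. -/
noncomputable def empDist {𝒳 : Type*} [Fintype 𝒳] [DecidableEq 𝒳] {N : ℕ}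
    (x : Fin N → 𝒳) : 𝒳 → ℝ :=
  fun a => ((Finset.univ.filter fun k => x k = a).card : ℝ) / N

/-- The DGL statistic of hypothesis `i`: the maximum over the sets
`A_{p,q} = {a : T q a ≤ T p a}` (for `p < q`) of `|T_i(A) - ν(A)|`. -/
noncomputable def dglScore {𝒳 : Type*} [Fintype 𝒳] {M : ℕ}
    (T : Fin M → 𝒳 → ℝ) (ν : 𝒳 → ℝ) (i : Fin M) : ℝ :=
  sSup {x | ∃ p q : Fin M, p < q ∧
    x = |(∑ a ∈ Finset.univ.filter fun a => T q a ≤ T p a, T i a) -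
         (∑ a ∈ Finset.univ.filter fun a => T q a ≤ T p a, ν a)|}

/-- The DGL test: accept the smallest hypothesis index minimizing the DGL statistic. -/
noncomputable def dglClassify {𝒳 : Type*} [Fintype 𝒳] {M : ℕ} (hM : 0 < M)
    (T : Fin M → 𝒳 → ℝ) (ν : 𝒳 → ℝ) : Fin M :=
  (Finset.univ.filter fun i => ∀ j, dglScore T ν i ≤ dglScore T ν j).min' (by
    obtain ⟨i, -, hi⟩ := Finset.exists_min_image Finset.univ (dglScore T ν)
      ⟨⟨0, hM⟩, Finset.mem_univ _⟩
    exact ⟨i, Finset.mem_filter.mpr ⟨Finset.mem_univ _, fun j => hi j (Finset.mem_univ _)⟩⟩)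

/-- The discrete measure on `𝒳` whose mass at `a` is `P a`. -/
noncomputable def measOf {𝒳 : Type*} [Fintype 𝒳] [MeasurableSpace 𝒳] (P : 𝒳 → ℝ) :
    Measure 𝒳 :=
  ∑ a, ENNReal.ofReal (P a) • Measure.dirac a

/-- The joint law of the DGL-based classification experiment on the sample space
`(training sequences) × (true hypothesis index) × (test sequence)`:
the `M` training sequences of length `N` are i.i.d. from `P 1, …, P M` respectively
and mutually independent, the hypothesis index `J` is uniform on `Fin M` and
independent of the training data, and given `J = j` the test sequence of length `n`
is i.i.d. from `P j`. -/
noncomputable def classMeasure {𝒳 : Type*} [Fintype 𝒳] [MeasurableSpace 𝒳]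
    {M N n : ℕ} (P : Fin M → 𝒳 → ℝ) :
    Measure ((Fin M → Fin N → 𝒳) × Fin M × (Fin n → 𝒳)) :=
  (M : ENNReal)⁻¹ • ∑ j : Fin M,
    (Measure.pi fun i => Measure.pi fun _ : Fin N => measOf (P i)).prod
      ((Measure.dirac j).prod (Measure.pi fun _ : Fin n => measOf (P j)))

/-- The classification-error event: the DGL test applied with the empirical training
distributions as nominal distributions outputs an index different from the true one. -/
def errEvent {𝒳 : Type*} [Fintype 𝒳] [DecidableEq 𝒳] {M N n : ℕ} (hM : 0 < M) :
    Set ((Fin M → Fin N → 𝒳) × Fin M × (Fin n → 𝒳)) :=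
  {ω | dglClassify hM (fun i => empDist (ω.1 i)) (empDist ω.2.2) ≠ ω.2.1}


section Aux
open Real

lemma hoeff_kernel {q : ℝ} (h0 : 0 ≤ q) (h1 : q ≤ 1) (t : ℝ) :
    1 - q + q * exp t ≤ exp (q * t + t ^ 2 / 8) := by
  set D : ℝ → ℝ := fun s => 1 - q + q * exp s with hD
  have hDpos : ∀ s, 0 < D s := by
    intro s
    rcases eq_or_lt_of_le h0 with h | h
    · simp [hD, ← h]
    · have h2 := exp_pos s
      have := mul_pos h h2
      simp only [hD]; nlinarith
  set f : ℝ → ℝ := fun s => q * s + s ^ 2 / 8 - Real.log (D s) with hf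
  set φ : ℝ → ℝ := fun s => q + s / 4 - q * exp s / D s with hφ
  have hDd : ∀ s, HasDerivAt D (q * exp s) s := by
    intro s
    exact ((Real.hasDerivAt_exp s).const_mul q).const_add (1 - q)
  have hfd : ∀ s, HasDerivAt f (φ s) s := by
    intro s
    have h2 : HasDerivAt (fun s : ℝ => q * s) q s := by
      simpa using (hasDerivAt_id s).const_mul q
    have h1' : HasDerivAt (fun s : ℝ => q * s + s ^ 2 / 8) (q + s * 2 / 8) s := by
      exact (h2.add ((hasDerivAt_pow 2 s).div_const 8)).congr_deriv (by
        rw [show (2:ℕ) - 1 = 1 from rfl, pow_one]; push_cast; ring)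
    have hlog : HasDerivAt (fun s => Real.log (D s)) (q * exp s / D s) s :=
      (hDd s).log (hDpos s).ne'
    have := h1'.sub hlog
    refine this.congr_deriv ?_
    simp only [hφ]; ring
  have hφd : ∀ s, HasDerivAt φ (1 / 4 - q * exp s * (1 - q) / (D s) ^ 2) s := by
    intro s
    have hdiv : HasDerivAt (fun s => q * exp s / D s)
        ((q * exp s * D s - q * exp s * (q * exp s)) / (D s) ^ 2) s :=
      (((Real.hasDerivAt_exp s).const_mul q)).div (hDd s) (hDpos s).ne'
    have h1' : HasDerivAt (fun s : ℝ => q + s / 4) (1 / 4) s := by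
      simpa using ((hasDerivAt_id s).div_const 4).const_add q
    have := h1'.sub hdiv
    refine this.congr_deriv ?_
    have he : q * exp s * D s - q * exp s * (q * exp s) = q * exp s * (1 - q) := by
      simp only [hD]; ring
    rw [he]
  have hφmono : Monotone φ := by
    apply monotone_of_deriv_nonneg (fun s => (hφd s).differentiableAt)
    intro s
    rw [(hφd s).deriv]
    have h3 : (0:ℝ) < (D s) ^ 2 := pow_pos (hDpos s) 2
    rw [sub_nonneg, div_le_iff₀ h3]
    simp only [hD]
    nlinarith [sq_nonneg ((1 - q) - q * exp s), exp_pos s]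
  have hφ0 : φ 0 = 0 := by simp [hφ, hD]
  have hf0 : f 0 = 0 := by simp [hf, hD]
  have hfc : Continuous f := (Differentiable.continuous fun s => (hfd s).differentiableAt)
  have key : ∀ t, 0 ≤ f t := by
    intro t
    rcases le_or_gt 0 t with ht | ht
    · have hmo : MonotoneOn f (Set.Icc 0 t) := by
        apply monotoneOn_of_deriv_nonneg (convex_Icc 0 t) hfc.continuousOn
        · intro s _; exact (hfd s).differentiableAt.differentiableWithinAt
        · intro s hs
          rw [(hfd s).deriv]
          rw [interior_Icc] at hs
          have := hφmono hs.1.le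
          rw [hφ0] at this; exact this
      have := hmo (Set.left_mem_Icc.2 ht) (Set.right_mem_Icc.2 ht) ht
      rwa [hf0] at this
    · have hmo : AntitoneOn f (Set.Icc t 0) := by
        apply antitoneOn_of_deriv_nonpos (convex_Icc t 0) hfc.continuousOn
        · intro s _; exact (hfd s).differentiableAt.differentiableWithinAt
        · intro s hs
          rw [(hfd s).deriv]
          rw [interior_Icc] at hs
          have := hφmono hs.2.le
          rw [hφ0] at this; exact this
      have := hmo (Set.left_mem_Icc.2 ht.le) (Set.right_mem_Icc.2 ht.le) ht.le
      rwa [hf0] at this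
  have hkey := key t
  have hlog : Real.log (D t) ≤ q * t + t ^ 2 / 8 := by
    simp only [hf] at hkey; linarith
  show D t ≤ exp (q * t + t ^ 2 / 8)
  calc D t = exp (Real.log (D t)) := (exp_log (hDpos t)).symm
  _ ≤ exp (q * t + t ^ 2 / 8) := exp_le_exp.2 hlog

section TV
variable {𝒳 : Type*} [Fintype 𝒳] (P Q R : 𝒳 → ℝ)

lemma tvDist_comm : tvDist P Q = tvDist Q P := by
  unfold tvDist
  congr 1
  exact Finset.sum_congr rfl fun a _ => abs_sub_comm _ _

lemma tvDist_triangle : tvDist P R ≤ tvDist P Q + tvDist Q R := by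
  unfold tvDist
  rw [← mul_add, ← Finset.sum_add_distrib]
  have : ∀ a ∈ Finset.univ, |P a - R a| ≤ |P a - Q a| + |Q a - R a| :=
    fun a _ => abs_sub_le _ _ _
  have := Finset.sum_le_sum this
  linarith

lemma abs_setSum_le (h : ∑ a, P a = ∑ a, Q a) (S : Finset 𝒳) :
    |∑ a ∈ S, P a - ∑ a ∈ S, Q a| ≤ tvDist P Q := by
  classical
  rw [← Finset.sum_sub_distrib]
  have h0 : ∑ a ∈ S, (P a - Q a) + ∑ a ∈ Sᶜ, (P a - Q a) = 0 := by
    rw [Finset.sum_add_sum_compl, Finset.sum_sub_distrib, h, sub_self]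
  have h1 : |∑ a ∈ S, (P a - Q a)| ≤ ∑ a ∈ S, |P a - Q a| :=
    Finset.abs_sum_le_sum_abs _ _
  have h2 : |∑ a ∈ Sᶜ, (P a - Q a)| ≤ ∑ a ∈ Sᶜ, |P a - Q a| :=
    Finset.abs_sum_le_sum_abs _ _
  have h3 : ∑ a ∈ S, |P a - Q a| + ∑ a ∈ Sᶜ, |P a - Q a| = ∑ a, |P a - Q a| :=
    Finset.sum_add_sum_compl _ _
  have h4 : |∑ a ∈ Sᶜ, (P a - Q a)| = |∑ a ∈ S, (P a - Q a)| := by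
    rw [show ∑ a ∈ Sᶜ, (P a - Q a) = -∑ a ∈ S, (P a - Q a) by linarith, abs_neg]
  unfold tvDist
  linarith
end TV

section Scheffe
variable {𝒳 : Type*} [Fintype 𝒳] (P Q : 𝒳 → ℝ)

lemma scheffe [DecidableEq 𝒳] (h : ∑ a, P a = ∑ a, Q a) [DecidablePred fun a => Q a ≤ P a] :
    ∑ a ∈ Finset.univ.filter (fun a => Q a ≤ P a), (P a - Q a) = tvDist P Q := by
  classical
  set F := Finset.univ.filter (fun a => Q a ≤ P a) with hF
  have h0 : ∑ a ∈ F, (P a - Q a) + ∑ a ∈ Fᶜ, (P a - Q a) = 0 := by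
    rw [Finset.sum_add_sum_compl, Finset.sum_sub_distrib, h, sub_self]
  have habs : ∑ a, |P a - Q a| = ∑ a ∈ F, (P a - Q a) + ∑ a ∈ Fᶜ, (Q a - P a) := by
    rw [← Finset.sum_add_sum_compl F (fun a => |P a - Q a|)]
    congr 1
    · refine Finset.sum_congr rfl fun a ha => ?_
      rw [hF, Finset.mem_filter] at ha
      rw [abs_of_nonneg (by linarith [ha.2])]
    · refine Finset.sum_congr rfl fun a ha => ?_
      rw [hF, Finset.mem_compl, Finset.mem_filter] at ha
      have : ¬ Q a ≤ P a := fun hc => ha ⟨Finset.mem_univ a, hc⟩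
      rw [abs_of_nonpos (by linarith [lt_of_not_ge this])]
      ring
  unfold tvDist
  have : ∑ a ∈ Fᶜ, (Q a - P a) = -∑ a ∈ Fᶜ, (P a - Q a) := by
    rw [← Finset.sum_neg_distrib]
    exact Finset.sum_congr rfl fun a _ => by ring
  linarith
end Scheffe

section DGL
variable {𝒳 : Type*} [Fintype 𝒳] {M : ℕ} (T : Fin M → 𝒳 → ℝ) (ν : 𝒳 → ℝ)

lemma scoreSet_finite (i : Fin M) : {x | ∃ p q : Fin M, p < q ∧
    x = |(∑ a ∈ Finset.univ.filter fun a => T q a ≤ T p a, T i a) -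
         (∑ a ∈ Finset.univ.filter fun a => T q a ≤ T p a, ν a)|}.Finite := by
  apply Set.Finite.subset (Set.finite_range (fun pq : Fin M × Fin M =>
    |(∑ a ∈ Finset.univ.filter fun a => T pq.2 a ≤ T pq.1 a, T i a) -
     (∑ a ∈ Finset.univ.filter fun a => T pq.2 a ≤ T pq.1 a, ν a)|))
  rintro x ⟨p, q, -, rfl⟩
  exact ⟨(p, q), rfl⟩

lemma le_dglScore (i p q : Fin M) (hpq : p < q) :
    |(∑ a ∈ Finset.univ.filter fun a => T q a ≤ T p a, T i a) -
     (∑ a ∈ Finset.univ.filter fun a => T q a ≤ T p a, ν a)| ≤ dglScore T ν i :=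
  le_csSup (scoreSet_finite T ν i).bddAbove ⟨p, q, hpq, rfl⟩

lemma dglScore_le (hM : 2 ≤ M) (i : Fin M) {C : ℝ}
    (hC : ∀ p q : Fin M, p < q →
      |(∑ a ∈ Finset.univ.filter fun a => T q a ≤ T p a, T i a) -
       (∑ a ∈ Finset.univ.filter fun a => T q a ≤ T p a, ν a)| ≤ C) :
    dglScore T ν i ≤ C := by
  apply csSup_le
  · refine ⟨_, ⟨⟨0, by omega⟩, ⟨1, by omega⟩, ?_, rfl⟩⟩
    exact Fin.mk_lt_mk.2 (by omega)
  · rintro x ⟨p, q, hpq, rfl⟩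
    exact hC p q hpq

lemma minPairTV_le {P : Fin M → 𝒳 → ℝ} {i j : Fin M} (hij : i ≠ j) :
    minPairTV P ≤ tvDist (P i) (P j) := by
  apply csInf_le
  · apply Set.Finite.bddBelow
    apply Set.Finite.subset (Set.finite_range (fun pq : Fin M × Fin M =>
      tvDist (P pq.1) (P pq.2)))
    rintro x ⟨p, q, -, rfl⟩
    exact ⟨(p, q), rfl⟩
  · exact ⟨i, j, hij, rfl⟩

lemma det_bound [DecidableEq 𝒳] (hM : 2 ≤ M) (P : Fin M → 𝒳 → ℝ)
    (hT : ∀ k, ∑ a, T k a = 1) (hν : ∑ a, ν a = 1) (hP : ∀ k, ∑ a, P k a = 1)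
    {i j : Fin M} (hij : i ≠ j) (hcl : dglScore T ν i ≤ dglScore T ν j) :
    tvDist (P i) (P j) ≤
      tvDist (T i) (P i) + 3 * tvDist (T j) (P j) + 2 * tvDist ν (P j) := by
  classical
  -- the Scheffé set for the pair (i, j)
  obtain ⟨F, hFi, hFν⟩ : ∃ F : Finset 𝒳,
      |∑ a ∈ F, T i a - ∑ a ∈ F, T j a| = tvDist (T i) (T j) ∧
      |∑ a ∈ F, T i a - ∑ a ∈ F, ν a| ≤ dglScore T ν i := by
    rcases hij.lt_or_gt with h | h
    · refine ⟨Finset.univ.filter fun a => T j a ≤ T i a, ?_, le_dglScore T ν i i j h⟩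
      rw [← Finset.sum_sub_distrib, scheffe _ _ ((hT i).trans (hT j).symm)]
      exact abs_of_nonneg (by
        have := tvDist_comm (T i) (T j)
        have h2 : 0 ≤ tvDist (T i) (T j) := by
          unfold tvDist
          positivity
        linarith)
    · refine ⟨Finset.univ.filter fun a => T i a ≤ T j a, ?_, le_dglScore T ν i j i h⟩
      rw [abs_sub_comm, ← Finset.sum_sub_distrib, scheffe _ _ ((hT j).trans (hT i).symm),
        tvDist_comm]
      exact abs_of_nonneg (by unfold tvDist; positivity)
  have hscore_j : dglScore T ν j ≤ tvDist (T j) (P j) + tvDist ν (P j) := by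
    apply dglScore_le T ν hM j
    intro p q hpq
    have h1 := abs_setSum_le (T j) (P j) ((hT j).trans (hP j).symm)
      (Finset.univ.filter fun a => T q a ≤ T p a)
    have h2 := abs_setSum_le (P j) ν ((hP j).trans hν.symm)
      (Finset.univ.filter fun a => T q a ≤ T p a)
    have h3 := abs_sub_le (∑ a ∈ Finset.univ.filter fun a => T q a ≤ T p a, T j a)
      (∑ a ∈ Finset.univ.filter fun a => T q a ≤ T p a, P j a)
      (∑ a ∈ Finset.univ.filter fun a => T q a ≤ T p a, ν a)
    have h4 : tvDist (P j) ν = tvDist ν (P j) := tvDist_comm _ _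
    linarith
  have hFj : |∑ a ∈ F, T j a - ∑ a ∈ F, ν a| ≤ tvDist (T j) (P j) + tvDist ν (P j) := by
    have h1 := abs_setSum_le (T j) (P j) ((hT j).trans (hP j).symm) F
    have h2 := abs_setSum_le (P j) ν ((hP j).trans hν.symm) F
    have h3 := abs_sub_le (∑ a ∈ F, T j a) (∑ a ∈ F, P j a) (∑ a ∈ F, ν a)
    have h4 : tvDist (P j) ν = tvDist ν (P j) := tvDist_comm _ _
    linarith
  have hTij : tvDist (T i) (T j) ≤ 2 * (tvDist (T j) (P j) + tvDist ν (P j)) := by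
    have h3 := abs_sub_le (∑ a ∈ F, T i a) (∑ a ∈ F, ν a) (∑ a ∈ F, T j a)
    have h5 : |∑ a ∈ F, ν a - ∑ a ∈ F, T j a| = |∑ a ∈ F, T j a - ∑ a ∈ F, ν a| :=
      abs_sub_comm _ _
    linarith
  have htr1 := tvDist_triangle (P i) (T i) (P j)
  have htr2 := tvDist_triangle (T i) (T j) (P j)
  have hsymm1 : tvDist (P i) (T i) = tvDist (T i) (P i) := tvDist_comm _ _
  have hsymm2 : tvDist (P i) (P j) ≤ tvDist (P i) (T i) + tvDist (T i) (P j) := htr1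
  linarith
end DGL

section Emp
variable {𝒳 : Type*} [Fintype 𝒳] [DecidableEq 𝒳] {m : ℕ}

lemma empDist_nonneg (x : Fin m → 𝒳) (a : 𝒳) : 0 ≤ empDist x a := by
  unfold empDist; positivity

lemma empDist_sum (hm : 0 < m) (x : Fin m → 𝒳) : ∑ a, empDist x a = 1 := by
  unfold empDist
  rw [← Finset.sum_div]
  rw [show ∑ a, ((Finset.univ.filter fun k => x k = a).card : ℝ)
      = ((m : ℝ)) from ?_]
  · field_simp
  · rw [← Nat.cast_sum]
    congr 1
    have := Finset.card_eq_sum_card_fiberwise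
      (f := x) (s := Finset.univ) (t := Finset.univ) (fun k _ => Finset.mem_univ _)
    simpa using this.symm

lemma empDist_setSum (x : Fin m → 𝒳) (S : Finset 𝒳) :
    ∑ a ∈ S, empDist x a
      = ((Finset.univ.filter fun k => x k ∈ S).card : ℝ) / m := by
  unfold empDist
  rw [← Finset.sum_div]
  congr 1
  rw [← Nat.cast_sum]
  congr 1
  have := Finset.card_eq_sum_card_fiberwise
    (f := x) (s := Finset.univ.filter fun k => x k ∈ S) (t := S)
    (fun k hk => (Finset.mem_filter.1 hk).2)
  rw [this]
  refine Finset.sum_congr rfl fun b hb => ?_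
  congr 1
  rw [Finset.filter_filter]
  refine (Finset.filter_congr fun k _ => ?_).symm
  constructor
  · rintro ⟨-, h⟩; exact h
  · intro h
    exact ⟨by rw [h]; exact hb, h⟩
end Emp

section Chernoff
variable {𝒳 : Type*} [Fintype 𝒳] [DecidableEq 𝒳]

lemma chernoff_real (Q : 𝒳 → ℝ) (hQ0 : ∀ a, 0 ≤ Q a) (hQ1 : ∑ a, Q a = 1)
    {m : ℕ} (hm : 0 < m) {ε : ℝ} (hε : 0 < ε) (S : Finset 𝒳) :
    ∑ x ∈ Finset.univ.filter (fun x : Fin m → 𝒳 =>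
        (∑ a ∈ S, Q a) + ε ≤ ∑ a ∈ S, empDist x a),
      ∏ k, Q (x k) ≤ Real.exp (-(2 * m * ε ^ 2)) := by
  classical
  set q := ∑ a ∈ S, Q a with hq
  have hq0 : 0 ≤ q := Finset.sum_nonneg fun a _ => hQ0 a
  have hq1 : q ≤ 1 := by
    rw [← hQ1]
    exact Finset.sum_le_sum_of_subset_of_nonneg (Finset.subset_univ S)
      (fun a _ _ => hQ0 a)
  set t : ℝ := 4 * ε with ht
  have htpos : 0 < t := by positivity
  set g : 𝒳 → ℝ := fun a => if a ∈ S then (1:ℝ) else 0 with hg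
  -- step 1: pointwise bound on the event
  have key1 : ∀ x ∈ Finset.univ.filter (fun x : Fin m → 𝒳 =>
      q + ε ≤ ∑ a ∈ S, empDist x a),
      ∏ k, Q (x k) ≤ (∏ k, (Q (x k) * Real.exp (t * g (x k))))
        * Real.exp (-(t * m * (q + ε))) := by
    intro x hx
    rw [Finset.mem_filter] at hx
    have hcount : (m : ℝ) * (q + ε) ≤ ((Finset.univ.filter fun k => x k ∈ S).card : ℝ) := by
      have := hx.2
      rw [empDist_setSum] at this
      rw [mul_comm]
      rw [← le_div_iff₀ (by exact_mod_cast hm)]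
      exact this
    have hsumg : ∑ k, g (x k) = ((Finset.univ.filter fun k => x k ∈ S).card : ℝ) := by
      rw [hg]
      simp [Finset.sum_ite, Finset.sum_const]
    rw [Finset.prod_mul_distrib, ← Real.exp_sum, ← Finset.mul_sum]
    rw [mul_assoc, ← Real.exp_add]
    have hexp : (1:ℝ) ≤ Real.exp (t * ∑ k, g (x k) + -(t * m * (q + ε))) := by
      rw [← Real.exp_zero]
      apply Real.exp_le_exp.2
      rw [hsumg]
      nlinarith
    have hprod : 0 ≤ ∏ k, Q (x k) := Finset.prod_nonneg fun k _ => hQ0 (x k)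
    nlinarith
  -- step 2: sum over the event ≤ sum over everything
  have key2 : ∑ x ∈ Finset.univ.filter (fun x : Fin m → 𝒳 =>
      q + ε ≤ ∑ a ∈ S, empDist x a), ∏ k, Q (x k)
      ≤ ∑ x : Fin m → 𝒳, (∏ k, (Q (x k) * Real.exp (t * g (x k))))
          * Real.exp (-(t * m * (q + ε))) := by
    calc _ ≤ ∑ x ∈ Finset.univ.filter (fun x : Fin m → 𝒳 =>
        q + ε ≤ ∑ a ∈ S, empDist x a),
          (∏ k, (Q (x k) * Real.exp (t * g (x k)))) * Real.exp (-(t * m * (q + ε))) :=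
        Finset.sum_le_sum key1
    _ ≤ _ := by
        apply Finset.sum_le_sum_of_subset_of_nonneg (Finset.filter_subset _ _)
        intro x _ _
        apply mul_nonneg
        · exact Finset.prod_nonneg fun k _ => mul_nonneg (hQ0 (x k)) (Real.exp_nonneg _)
        · exact Real.exp_nonneg _
  -- step 3: factor the sum of products
  have key3 : ∑ x : Fin m → 𝒳, ∏ k, (Q (x k) * Real.exp (t * g (x k)))
      = (∑ a, Q a * Real.exp (t * g a)) ^ m := by
    rw [← Fin.prod_const m (∑ a, Q a * Real.exp (t * g a))]
    rw [Finset.prod_univ_sum (fun _ : Fin m => (Finset.univ : Finset 𝒳))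
      (fun _ a => Q a * Real.exp (t * g a))]
    rw [Fintype.piFinset_univ]
  -- step 4: compute the inner sum
  have key4 : ∑ a, Q a * Real.exp (t * g a) = 1 - q + q * Real.exp t := by
    rw [hg]
    have : ∀ a, Q a * Real.exp (t * (if a ∈ S then (1:ℝ) else 0))
        = (if a ∈ S then Q a * Real.exp t else Q a) := by
      intro a
      by_cases h : a ∈ S <;> simp [h]
    rw [Finset.sum_congr rfl fun a _ => this a]
    rw [Finset.sum_ite]
    have e1 : Finset.univ.filter (fun x => x ∈ S) = S := by ext a; simp
    have e2 : Finset.univ.filter (fun x => x ∉ S) = Sᶜ := by ext a; simp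
    have e3 : ∑ a ∈ Sᶜ, Q a = 1 - q := by
      have h := Finset.sum_add_sum_compl S Q
      rw [hQ1] at h
      linarith
    rw [e1, e2, e3, ← Finset.sum_mul, ← hq]
    ring
  -- step 5: put everything together
  have key5 : (1 - q + q * Real.exp t) ^ m * Real.exp (-(t * m * (q + ε)))
      ≤ Real.exp (-(2 * m * ε ^ 2)) := by
    have hbase : (0:ℝ) ≤ 1 - q + q * Real.exp t := by
      have := Real.exp_nonneg t
      nlinarith
    have h1 : (1 - q + q * Real.exp t) ^ m ≤ Real.exp (q * t + t ^ 2 / 8) ^ m :=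
      pow_le_pow_left₀ hbase (hoeff_kernel hq0 hq1 t) m
    have h2 : Real.exp (q * t + t ^ 2 / 8) ^ m = Real.exp (m * (q * t + t ^ 2 / 8)) :=
      (Real.exp_nat_mul _ m).symm
    have h3 : Real.exp (m * (q * t + t ^ 2 / 8)) * Real.exp (-(t * m * (q + ε)))
        = Real.exp (-(2 * m * ε ^ 2)) := by
      rw [← Real.exp_add]
      congr 1
      rw [ht]
      ring
    calc (1 - q + q * Real.exp t) ^ m * Real.exp (-(t * m * (q + ε)))
        ≤ Real.exp (m * (q * t + t ^ 2 / 8)) * Real.exp (-(t * m * (q + ε))) := by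
          rw [← h2]
          exact mul_le_mul_of_nonneg_right h1 (Real.exp_nonneg _)
    _ = _ := h3
  calc ∑ x ∈ Finset.univ.filter (fun x : Fin m → 𝒳 =>
        (∑ a ∈ S, Q a) + ε ≤ ∑ a ∈ S, empDist x a), ∏ k, Q (x k)
      ≤ ∑ x : Fin m → 𝒳, (∏ k, (Q (x k) * Real.exp (t * g (x k))))
          * Real.exp (-(t * m * (q + ε))) := key2
  _ = (∑ a, Q a * Real.exp (t * g a)) ^ m * Real.exp (-(t * m * (q + ε))) := by
      rw [← Finset.sum_mul, key3]
  _ = (1 - q + q * Real.exp t) ^ m * Real.exp (-(t * m * (q + ε))) := by rw [key4]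
  _ ≤ Real.exp (-(2 * m * ε ^ 2)) := key5
end Chernoff

end Aux

-- measure layer
section MeasureLayer
open Real

variable {𝒳 : Type*} [Fintype 𝒳] [MeasurableSpace 𝒳] [MeasurableSingletonClass 𝒳]

lemma measOf_singleton (Q : 𝒳 → ℝ) (a : 𝒳) :
    measOf Q {a} = ENNReal.ofReal (Q a) := by
  classical
  unfold measOf
  rw [Measure.finset_sum_apply]
  have h : ∀ b : 𝒳, (ENNReal.ofReal (Q b) • Measure.dirac b) {a}
      = if b = a then ENNReal.ofReal (Q b) else 0 := by
    intro b
    rw [Measure.smul_apply, Measure.dirac_apply' _ (measurableSet_singleton a)]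
    by_cases h : b = a <;> simp [Set.indicator_apply, h]
  rw [Finset.sum_congr rfl fun b _ => h b, Finset.sum_ite_eq' Finset.univ a]
  simp

lemma isProbabilityMeasure_measOf {Q : 𝒳 → ℝ} (hQ0 : ∀ a, 0 ≤ Q a)
    (hQ1 : ∑ a, Q a = 1) : IsProbabilityMeasure (measOf Q) := by
  constructor
  unfold measOf
  rw [Measure.finset_sum_apply]
  have h : ∀ b : 𝒳, (ENNReal.ofReal (Q b) • Measure.dirac b) Set.univ
      = ENNReal.ofReal (Q b) := by
    intro b
    rw [Measure.smul_apply, measure_univ, smul_eq_mul, mul_one]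
  rw [Finset.sum_congr rfl fun b _ => h b,
    ← ENNReal.ofReal_sum_of_nonneg (fun b _ => hQ0 b), hQ1, ENNReal.ofReal_one]

lemma pi_measOf_finset_apply {Q : 𝒳 → ℝ} (hQ0 : ∀ a, 0 ≤ Q a)
    (hQ1 : ∑ a, Q a = 1) {m : ℕ} (F : Finset (Fin m → 𝒳)) :
    (Measure.pi fun _ : Fin m => measOf Q) ↑F
      = ENNReal.ofReal (∑ x ∈ F, ∏ k, Q (x k)) := by
  haveI := isProbabilityMeasure_measOf hQ0 hQ1
  have hsing : ∀ x : Fin m → 𝒳,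
      (Measure.pi fun _ : Fin m => measOf Q) {x} = ENNReal.ofReal (∏ k, Q (x k)) := by
    intro x
    rw [← Set.univ_pi_singleton x, Measure.pi_pi,
      ENNReal.ofReal_prod_of_nonneg (fun k _ => hQ0 (x k))]
    exact Finset.prod_congr rfl fun k _ => measOf_singleton Q (x k)
  calc (Measure.pi fun _ : Fin m => measOf Q) ↑F
      = (Measure.pi fun _ : Fin m => measOf Q) (⋃ x ∈ F, {x}) := by
        congr 1
        ext y; simp
  _ = ∑ x ∈ F, (Measure.pi fun _ : Fin m => measOf Q) {x} := by
        apply measure_biUnion_finset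
        · intro x _ y _ hxy
          simpa [Function.onFun, Set.disjoint_singleton] using hxy
        · exact fun x _ => measurableSet_singleton x
  _ = ∑ x ∈ F, ENNReal.ofReal (∏ k, Q (x k)) := Finset.sum_congr rfl fun x _ => hsing x
  _ = ENNReal.ofReal (∑ x ∈ F, ∏ k, Q (x k)) :=
      (ENNReal.ofReal_sum_of_nonneg fun x _ =>
        Finset.prod_nonneg fun k _ => hQ0 (x k)).symm

lemma tail_bound [DecidableEq 𝒳] {Q : 𝒳 → ℝ} (hQ0 : ∀ a, 0 ≤ Q a)
    (hQ1 : ∑ a, Q a = 1) {m : ℕ} (hm : 0 < m) {ε : ℝ} (hε : 0 < ε) :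
    (Measure.pi fun _ : Fin m => measOf Q) {x | ε ≤ tvDist (empDist x) Q}
      ≤ ENNReal.ofReal ((2:ℝ) ^ (Fintype.card 𝒳) * Real.exp (-(2 * m * ε ^ 2))) := by
  classical
  have hsub : {x : Fin m → 𝒳 | ε ≤ tvDist (empDist x) Q} ⊆
      ⋃ S : Finset 𝒳, {x | (∑ a ∈ S, Q a) + ε ≤ ∑ a ∈ S, empDist x a} := by
    intro x hx
    simp only [Set.mem_setOf_eq] at hx
    refine Set.mem_iUnion.2 ⟨Finset.univ.filter fun a => Q a ≤ empDist x a, ?_⟩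
    have hsch := scheffe (empDist x) Q ((empDist_sum hm x).trans hQ1.symm)
    rw [Finset.sum_sub_distrib] at hsch
    simp only [Set.mem_setOf_eq]
    linarith
  have hperS : ∀ S : Finset 𝒳,
      (Measure.pi fun _ : Fin m => measOf Q)
          {x | (∑ a ∈ S, Q a) + ε ≤ ∑ a ∈ S, empDist x a}
        ≤ ENNReal.ofReal (Real.exp (-(2 * m * ε ^ 2))) := by
    intro S
    have hset : {x : Fin m → 𝒳 | (∑ a ∈ S, Q a) + ε ≤ ∑ a ∈ S, empDist x a}
        = ↑(Finset.univ.filter fun x : Fin m → 𝒳 =>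
            (∑ a ∈ S, Q a) + ε ≤ ∑ a ∈ S, empDist x a) := by
      ext x; simp
    rw [hset, pi_measOf_finset_apply hQ0 hQ1]
    exact ENNReal.ofReal_le_ofReal (chernoff_real Q hQ0 hQ1 hm hε S)
  calc (Measure.pi fun _ : Fin m => measOf Q) {x | ε ≤ tvDist (empDist x) Q}
      ≤ (Measure.pi fun _ : Fin m => measOf Q)
          (⋃ S : Finset 𝒳, {x | (∑ a ∈ S, Q a) + ε ≤ ∑ a ∈ S, empDist x a}) :=
        measure_mono hsub
  _ ≤ ∑' S : Finset 𝒳, (Measure.pi fun _ : Fin m => measOf Q)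
          {x | (∑ a ∈ S, Q a) + ε ≤ ∑ a ∈ S, empDist x a} := measure_iUnion_le _
  _ = ∑ S : Finset 𝒳, (Measure.pi fun _ : Fin m => measOf Q)
          {x | (∑ a ∈ S, Q a) + ε ≤ ∑ a ∈ S, empDist x a} := tsum_fintype _
  _ ≤ ∑ S : Finset 𝒳, ENNReal.ofReal (Real.exp (-(2 * m * ε ^ 2))) :=
      Finset.sum_le_sum fun S _ => hperS S
  _ = (Fintype.card (Finset 𝒳)) • ENNReal.ofReal (Real.exp (-(2 * m * ε ^ 2))) := by
      rw [Finset.sum_const, Finset.card_univ]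
  _ = ENNReal.ofReal ((2:ℝ) ^ (Fintype.card 𝒳) * Real.exp (-(2 * m * ε ^ 2))) := by
      rw [Fintype.card_finset, nsmul_eq_mul, ← ENNReal.ofReal_natCast,
        ← ENNReal.ofReal_mul (by positivity)]
      push_cast
      ring_nf

end MeasureLayer

lemma dglScore_dglClassify_le {𝒳 : Type*} [Fintype 𝒳] {M : ℕ} (hM : 0 < M)
    (T : Fin M → 𝒳 → ℝ) (ν : 𝒳 → ℝ) (j : Fin M) :
    dglScore T ν (dglClassify hM T ν) ≤ dglScore T ν j := by
  have hne : (Finset.univ.filter fun i => ∀ j, dglScore T ν i ≤ dglScore T ν j).Nonempty := by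
    obtain ⟨i, -, hi⟩ := Finset.exists_min_image Finset.univ (dglScore T ν)
      ⟨⟨0, hM⟩, Finset.mem_univ _⟩
    exact ⟨i, Finset.mem_filter.mpr ⟨Finset.mem_univ _, fun j => hi j (Finset.mem_univ _)⟩⟩
  have h := Finset.min'_mem
    (Finset.univ.filter fun i => ∀ j, dglScore T ν i ≤ dglScore T ν j) hne
  rw [Finset.mem_filter] at h
  exact h.2 j



theorem stmt_13 {𝒳 : Type*} [Fintype 𝒳] [DecidableEq 𝒳] [MeasurableSpace 𝒳]
    [MeasurableSingletonClass 𝒳]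
    {M : ℕ} (hM : 2 ≤ M)
    (P : Fin M → 𝒳 → ℝ) (hP0 : ∀ i a, 0 ≤ P i a) (hP1 : ∀ i, ∑ a, P i a = 1)
    {n N : ℕ} (hn : 0 < n) (hN : 0 < N) (α : ℝ) (hα : 0 < α)
    (hNnα : (N : ℝ) = n * α)
    (hsep : 0 < minPairTV P) :
    ((classMeasure (N := N) (n := n) P)
        (errEvent (𝒳 := 𝒳) (by omega : 0 < M))).toReal ≤
      2 * M * Real.exp (-(n : ℝ) *
        (α * minPairTV P ^ 2 / (2 * (2 + Real.sqrt α) ^ 2) -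
          max (2 * Real.log ((M : ℝ) - 1) / n)
            ((Fintype.card 𝒳 : ℝ) * Real.log 2 / n))) := by
  classical
  have hM0 : 0 < M := by omega
  have hMR : (2:ℝ) ≤ (M:ℝ) := by exact_mod_cast hM
  haveI hPM : ∀ k : Fin M, IsProbabilityMeasure (measOf (P k)) :=
    fun k => isProbabilityMeasure_measOf (hP0 k) (hP1 k)
  set V := minPairTV P with hV
  set c : ℝ := 2 + Real.sqrt α with hc
  have hsqrt : 0 < Real.sqrt α := Real.sqrt_pos.2 hα
  have hcpos : 0 < c := by rw [hc]; linarith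
  set ε₁ : ℝ := V / (2 * c) with hε₁def
  set ε₂ : ℝ := Real.sqrt α * V / (2 * c) with hε₂def
  have hε₁ : 0 < ε₁ := div_pos hsep (by linarith)
  have hε₂ : 0 < ε₂ := div_pos (mul_pos hsqrt hsep) (by linarith)
  set A : ℝ := α * V ^ 2 / (2 * c ^ 2) with hA
  have hA1 : 2 * (N:ℝ) * ε₁ ^ 2 = (n:ℝ) * A := by
    rw [hε₁def, hA, hNnα]
    field_simp
  have hA2 : 2 * (n:ℝ) * ε₂ ^ 2 = (n:ℝ) * A := by
    rw [hε₂def, hA, div_pow, mul_pow, Real.sq_sqrt hα.le]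
    field_simp
  set D := Fintype.card 𝒳 with hD
  set Z : ENNReal := ENNReal.ofReal ((2:ℝ) ^ D * Real.exp (-((n:ℝ) * A))) with hZ
  -- the training-deviation events
  have htrain : ∀ i j : Fin M,
      ((Measure.pi fun i => Measure.pi fun _ : Fin N => measOf (P i)).prod
        ((Measure.dirac j).prod (Measure.pi fun _ : Fin n => measOf (P j))))
        {ω : (Fin M → Fin N → 𝒳) × Fin M × (Fin n → 𝒳) |
          ε₁ ≤ tvDist (empDist (ω.1 i)) (P i)} ≤ Z := by
    intro i j
    have hseteq : {ω : (Fin M → Fin N → 𝒳) × Fin M × (Fin n → 𝒳) |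
        ε₁ ≤ tvDist (empDist (ω.1 i)) (P i)}
        = {t : Fin M → Fin N → 𝒳 | ε₁ ≤ tvDist (empDist (t i)) (P i)} ×ˢ Set.univ := by
      ext ω; simp [Set.mem_prod]
    rw [hseteq, Measure.prod_prod, measure_univ, mul_one]
    have hpi : {t : Fin M → Fin N → 𝒳 | ε₁ ≤ tvDist (empDist (t i)) (P i)}
        = Set.univ.pi (Function.update (fun _ : Fin M => (Set.univ : Set (Fin N → 𝒳))) i
            {y : Fin N → 𝒳 | ε₁ ≤ tvDist (empDist y) (P i)}) := by
      ext t
      simp only [Set.mem_pi, Set.mem_univ, forall_true_left, Set.mem_setOf_eq]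
      constructor
      · intro h k
        rcases eq_or_ne k i with rfl | hk
        · rw [Function.update_self]; exact h
        · rw [Function.update_of_ne hk]; trivial
      · intro h
        have := h i
        rwa [Function.update_self] at this
    rw [hpi, Measure.pi_pi]
    rw [Fintype.prod_eq_single i (fun k hk => by
      rw [Function.update_of_ne hk]; exact measure_univ)]
    rw [Function.update_self]
    refine le_trans (tail_bound (hP0 i) (hP1 i) hN hε₁) ?_
    rw [hZ, show -(2 * (N:ℝ) * ε₁ ^ 2) = -((n:ℝ) * A) by rw [hA1]]
  -- the test-deviation event
  have htest : ∀ j : Fin M,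
      ((Measure.pi fun i => Measure.pi fun _ : Fin N => measOf (P i)).prod
        ((Measure.dirac j).prod (Measure.pi fun _ : Fin n => measOf (P j))))
        {ω : (Fin M → Fin N → 𝒳) × Fin M × (Fin n → 𝒳) |
          ε₂ ≤ tvDist (empDist ω.2.2) (P j)} ≤ Z := by
    intro j
    have hseteq : {ω : (Fin M → Fin N → 𝒳) × Fin M × (Fin n → 𝒳) |
        ε₂ ≤ tvDist (empDist ω.2.2) (P j)}
        = Set.univ ×ˢ (Set.univ ×ˢ {y : Fin n → 𝒳 | ε₂ ≤ tvDist (empDist y) (P j)}) := by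
      ext ω; simp [Set.mem_prod]
    rw [hseteq, Measure.prod_prod, Measure.prod_prod, measure_univ, measure_univ,
      one_mul, one_mul]
    refine le_trans (tail_bound (hP0 j) (hP1 j) hn hε₂) ?_
    rw [hZ, show -(2 * (n:ℝ) * ε₂ ^ 2) = -((n:ℝ) * A) by rw [hA2]]
  -- the wrong-label event is null
  have hdirac : ∀ j : Fin M,
      ((Measure.pi fun i => Measure.pi fun _ : Fin N => measOf (P i)).prod
        ((Measure.dirac j).prod (Measure.pi fun _ : Fin n => measOf (P j))))
        {ω : (Fin M → Fin N → 𝒳) × Fin M × (Fin n → 𝒳) | ω.2.1 ≠ j} = 0 := by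
    intro j
    have hseteq : {ω : (Fin M → Fin N → 𝒳) × Fin M × (Fin n → 𝒳) | ω.2.1 ≠ j}
        = Set.univ ×ˢ (({j}ᶜ : Set (Fin M)) ×ˢ Set.univ) := by
      ext ω; simp [Set.mem_prod]
    rw [hseteq, Measure.prod_prod, Measure.prod_prod, measure_univ, measure_univ,
      one_mul, mul_one]
    rw [Measure.dirac_apply' _ (measurableSet_singleton j).compl]
    simp
  -- inclusion of the error event in the union of deviation events
  have hsubj : ∀ j : Fin M, errEvent (𝒳 := 𝒳) (M := M) (N := N) (n := n) hM0 ⊆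
      (⋃ i : Fin M, {ω : (Fin M → Fin N → 𝒳) × Fin M × (Fin n → 𝒳) |
          ε₁ ≤ tvDist (empDist (ω.1 i)) (P i)}) ∪
      ({ω : (Fin M → Fin N → 𝒳) × Fin M × (Fin n → 𝒳) |
          ε₂ ≤ tvDist (empDist ω.2.2) (P j)} ∪
       {ω : (Fin M → Fin N → 𝒳) × Fin M × (Fin n → 𝒳) | ω.2.1 ≠ j}) := by
    intro j ω hω
    by_cases hj : ω.2.1 = j
    · by_contra hnot
      simp only [Set.mem_union, Set.mem_iUnion, Set.mem_setOf_eq, not_or,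
        not_exists, not_le] at hnot
      obtain ⟨h1, h2, -⟩ := hnot
      have hω' : dglClassify hM0 (fun k => empDist (ω.1 k)) (empDist ω.2.2) ≠ j := by
        rw [← hj]; exact hω
      set i := dglClassify hM0 (fun k => empDist (ω.1 k)) (empDist ω.2.2) with hi
      have hcl : dglScore (fun k => empDist (ω.1 k)) (empDist ω.2.2) i ≤
          dglScore (fun k => empDist (ω.1 k)) (empDist ω.2.2) j :=
        dglScore_dglClassify_le hM0 _ _ j
      have hdet := det_bound (fun k => empDist (ω.1 k)) (empDist ω.2.2) hM P
        (fun k => empDist_sum hN (ω.1 k)) (empDist_sum hn ω.2.2) hP1 hω' hcl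
      have hVle := minPairTV_le (P := P) hω'
      have harith : 4 * ε₁ + 2 * ε₂ = V := by
        rw [hε₁def, hε₂def, hc]
        field_simp
        ring
      have hh1 := h1 i
      have hh2 := h1 j
      rw [← hV] at hVle
      linarith
    · exact Or.inr (Or.inr hj)
  -- per-hypothesis measure bound
  have hν : ∀ j : Fin M,
      ((Measure.pi fun i => Measure.pi fun _ : Fin N => measOf (P i)).prod
        ((Measure.dirac j).prod (Measure.pi fun _ : Fin n => measOf (P j))))
        (errEvent (𝒳 := 𝒳) (M := M) (N := N) (n := n) hM0)
        ≤ (M : ENNReal) * Z + Z := by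
    intro j
    set μj := ((Measure.pi fun i => Measure.pi fun _ : Fin N => measOf (P i)).prod
        ((Measure.dirac j).prod (Measure.pi fun _ : Fin n => measOf (P j)))) with hμj
    calc μj (errEvent (𝒳 := 𝒳) (M := M) (N := N) (n := n) hM0)
        ≤ μj ((⋃ i : Fin M, {ω : (Fin M → Fin N → 𝒳) × Fin M × (Fin n → 𝒳) |
            ε₁ ≤ tvDist (empDist (ω.1 i)) (P i)}) ∪
          ({ω : (Fin M → Fin N → 𝒳) × Fin M × (Fin n → 𝒳) |
            ε₂ ≤ tvDist (empDist ω.2.2) (P j)} ∪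
          {ω : (Fin M → Fin N → 𝒳) × Fin M × (Fin n → 𝒳) | ω.2.1 ≠ j})) :=
        measure_mono (hsubj j)
    _ ≤ μj (⋃ i : Fin M, {ω : (Fin M → Fin N → 𝒳) × Fin M × (Fin n → 𝒳) |
            ε₁ ≤ tvDist (empDist (ω.1 i)) (P i)}) +
        (μj {ω : (Fin M → Fin N → 𝒳) × Fin M × (Fin n → 𝒳) |
            ε₂ ≤ tvDist (empDist ω.2.2) (P j)} +
         μj {ω : (Fin M → Fin N → 𝒳) × Fin M × (Fin n → 𝒳) | ω.2.1 ≠ j}) :=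
        le_trans (measure_union_le _ _) (by gcongr; exact measure_union_le _ _)
    _ ≤ (M : ENNReal) * Z + (Z + 0) := by
        gcongr
        · calc μj (⋃ i : Fin M, {ω : (Fin M → Fin N → 𝒳) × Fin M × (Fin n → 𝒳) |
              ε₁ ≤ tvDist (empDist (ω.1 i)) (P i)})
              ≤ ∑' i : Fin M, μj {ω : (Fin M → Fin N → 𝒳) × Fin M × (Fin n → 𝒳) |
                ε₁ ≤ tvDist (empDist (ω.1 i)) (P i)} := measure_iUnion_le _
          _ = ∑ i : Fin M, μj {ω : (Fin M → Fin N → 𝒳) × Fin M × (Fin n → 𝒳) |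
                ε₁ ≤ tvDist (empDist (ω.1 i)) (P i)} := tsum_fintype _
          _ ≤ ∑ _i : Fin M, Z := Finset.sum_le_sum fun i _ => htrain i j
          _ = (M : ENNReal) * Z := by
              rw [Finset.sum_const, Finset.card_univ, Fintype.card_fin, nsmul_eq_mul]
        · exact htest j
        · exact le_of_eq (hdirac j)
    _ = (M : ENNReal) * Z + Z := by rw [add_zero]
  -- total bound in ENNReal
  have hmain : (classMeasure (N := N) (n := n) P)
      (errEvent (𝒳 := 𝒳) (by omega : 0 < M)) ≤ ((M : ENNReal) + 1) * Z := by
    have hEE : errEvent (𝒳 := 𝒳) (M := M) (N := N) (n := n) (by omega : 0 < M)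
        = errEvent (𝒳 := 𝒳) (M := M) (N := N) (n := n) hM0 := rfl
    rw [hEE, classMeasure, Measure.smul_apply, Measure.finset_sum_apply, smul_eq_mul]
    calc (M : ENNReal)⁻¹ * ∑ j : Fin M,
        ((Measure.pi fun i => Measure.pi fun _ : Fin N => measOf (P i)).prod
          ((Measure.dirac j).prod (Measure.pi fun _ : Fin n => measOf (P j))))
          (errEvent (𝒳 := 𝒳) (M := M) (N := N) (n := n) hM0)
        ≤ (M : ENNReal)⁻¹ * ∑ _j : Fin M, ((M : ENNReal) * Z + Z) := by
          gcongr with j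
          exact hν j
    _ = (M : ENNReal)⁻¹ * ((M : ENNReal) * ((M : ENNReal) * Z + Z)) := by
          rw [Finset.sum_const, Finset.card_univ, Fintype.card_fin, nsmul_eq_mul]
    _ = ((M : ENNReal) + 1) * Z := by
          rw [← mul_assoc, ENNReal.inv_mul_cancel (by exact_mod_cast hM0.ne')
            (ENNReal.natCast_ne_top M), one_mul, add_mul, one_mul]
  -- convert to the real bound
  set Bm : ℝ := max (2 * Real.log ((M : ℝ) - 1) / n) ((D : ℝ) * Real.log 2 / n) with hBm
  have hZfin : ((M : ENNReal) + 1) * Z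
      = ENNReal.ofReal (((M : ℝ) + 1) * ((2:ℝ) ^ D * Real.exp (-((n:ℝ) * A)))) := by
    rw [hZ, show ((M : ENNReal) + 1) = ENNReal.ofReal ((M : ℝ) + 1) by
        rw [ENNReal.ofReal_add (by positivity) zero_le_one, ENNReal.ofReal_natCast,
          ENNReal.ofReal_one],
      ← ENNReal.ofReal_mul (by positivity)]
  have hreal : ((M : ℝ) + 1) * ((2:ℝ) ^ D * Real.exp (-((n:ℝ) * A)))
      ≤ 2 * M * Real.exp (-(n : ℝ) * (A - Bm)) := by
    have hnpos : (0:ℝ) < n := by exact_mod_cast hn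
    have hnB : (D : ℝ) * Real.log 2 ≤ (n:ℝ) * Bm := by
      calc (D:ℝ) * Real.log 2 = (n:ℝ) * ((D:ℝ) * Real.log 2 / n) := by field_simp
      _ ≤ (n:ℝ) * Bm := by
          apply mul_le_mul_of_nonneg_left (le_max_right _ _) hnpos.le
    have h2D : (2:ℝ) ^ D ≤ Real.exp ((n:ℝ) * Bm) := by
      calc (2:ℝ) ^ D = Real.exp ((D:ℝ) * Real.log 2) := by
            rw [Real.exp_nat_mul, Real.exp_log two_pos]
      _ ≤ Real.exp ((n:ℝ) * Bm) := Real.exp_le_exp.2 hnB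
    have hsplit : Real.exp (-(n : ℝ) * (A - Bm))
        = Real.exp (-((n:ℝ) * A)) * Real.exp ((n:ℝ) * Bm) := by
      rw [← Real.exp_add]; congr 1; ring
    rw [hsplit]
    have hE0 : (0:ℝ) < Real.exp (-((n:ℝ) * A)) := Real.exp_pos _
    calc ((M : ℝ) + 1) * ((2:ℝ) ^ D * Real.exp (-((n:ℝ) * A)))
        ≤ (2 * M) * ((2:ℝ) ^ D * Real.exp (-((n:ℝ) * A))) := by
          apply mul_le_mul_of_nonneg_right (by linarith) (by positivity)
    _ ≤ (2 * M) * (Real.exp ((n:ℝ) * Bm) * Real.exp (-((n:ℝ) * A))) := by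
          apply mul_le_mul_of_nonneg_left
            (mul_le_mul_of_nonneg_right h2D hE0.le) (by linarith)
    _ = 2 * M * (Real.exp (-((n:ℝ) * A)) * Real.exp ((n:ℝ) * Bm)) := by ring
  refine ENNReal.toReal_le_of_le_ofReal (by positivity) ?_
  refine le_trans hmain ?_
  rw [hZfin]
  exact ENNReal.ofReal_le_ofReal hreal
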